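/- Let (X,d) and (Y,d′) be metric spaces and equip X × Y with the metric (d×d′)((x₁,y₁),(x₂,y₂)) = max(d(x₁,x₂), d′(y₁,y₂)). Then for any ε > 0, widim_ε(X × Y, d×d′) ≤ widim_ε(X,d) + widim_ε(Y,d′). -/

import Mathlib

open scoped ENNReal

/-- An abstract finite simplicial complex on a vertex type `V`: a finite, downward closed
family of nonempty finite sets of vertices. -/
structure FinSimpComplex (V : Type) where
  faces : Finset (Finset V)
  nonempty_of_mem : ∀ s ∈ faces, s.Nonempty
  down_closed : ∀ s ∈ faces, ∀ t ⊆ s, t.Nonempty → t ∈ faces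

namespace FinSimpComplex

/-- The geometric realization of `K`: the set of barycentric coordinate functions supported
on a face of `K`. -/
def space {V : Type} [Fintype V] (K : FinSimpComplex V) : Set (V → ℝ) :=
  {x | (∀ v, 0 ≤ x v) ∧ (∑ v, x v = 1) ∧ ∃ s ∈ K.faces, ∀ v, x v ≠ 0 → v ∈ s}

/-- `K` has dimension at most `n`. -/
def dimLE {V : Type} (K : FinSimpComplex V) (n : ℕ) : Prop :=
  ∀ s ∈ K.faces, s.card ≤ n + 1

/-- The dimension of `K` (with value `0` for the empty complex). -/
def dim {V : Type} (K : FinSimpComplex V) : ℕ :=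
  K.faces.sup fun s => s.card - 1

/-- The vertex set of `K`. -/
def vertexSet {V : Type} [Fintype V] [DecidableEq V] (K : FinSimpComplex V) : Finset V :=
  Finset.univ.filter fun v => {v} ∈ K.faces

/-- The open star of the vertex `v` in the realization of `K`: the union of the interiors of
the simplices containing `v`, i.e. the points whose `v`-th barycentric coordinate is nonzero. -/
def star {V : Type} [Fintype V] (K : FinSimpComplex V) (v : V) : Set ↥K.space :=
  {x | (x : V → ℝ) v ≠ 0}

/-- The full subcomplex of `K` spanned by the vertex set `A`. -/
def fullSub {V : Type} [DecidableEq V] (K : FinSimpComplex V) (A : Finset V) :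
    FinSimpComplex V where
  faces := K.faces.filter fun s => s ⊆ A
  nonempty_of_mem s hs := K.nonempty_of_mem s (Finset.mem_filter.1 hs).1
  down_closed s hs t hts htne := Finset.mem_filter.2
    ⟨K.down_closed s (Finset.mem_filter.1 hs).1 t hts htne,
     hts.trans (Finset.mem_filter.1 hs).2⟩

end FinSimpComplex

/-- The diameter of a set with respect to a distance function `d`, valued in `ℝ≥0∞`. -/
noncomputable def diamOn {X : Type*} (d : X → X → ℝ) (S : Set X) : ℝ≥0∞ :=
  ⨆ x ∈ S, ⨆ y ∈ S, ENNReal.ofReal (d x y)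

/-- `f` is an `ε`-embedding w.r.t. `d`: it is continuous and all its fibers have
`d`-diameter `< ε`. -/
def IsEpsEmbedding {X P : Type*} [TopologicalSpace X] [TopologicalSpace P]
    (d : X → X → ℝ) (ε : ℝ) (f : X → P) : Prop :=
  Continuous f ∧ ∀ p : P, diamOn d (f ⁻¹' {p}) < ENNReal.ofReal ε

/-- The `ε`-width dimension of `X` w.r.t. `d`: the minimal integer `n ≥ 0` such that there is
an `ε`-embedding of `X` into some at most `n`-dimensional finite simplicial complex
(`⊤` if no such embedding exists). -/
noncomputable def widim (X : Type*) [TopologicalSpace X] (d : X → X → ℝ) (ε : ℝ) : ℝ≥0∞ :=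
  sInf {r : ℝ≥0∞ | ∃ n : ℕ, (n : ℝ≥0∞) = r ∧
    ∃ (k : ℕ) (K : FinSimpComplex (Fin k)) (f : X → ↥K.space),
      K.dimLE n ∧ IsEpsEmbedding d ε f}

/-- The dynamical distance `d_N(x,y) = max_{0 ≤ n < N} d(Tⁿx, Tⁿy)`. -/
noncomputable def dynDist {X : Type*} (d : X → X → ℝ) (T : X → X) (N : ℕ) (x y : X) : ℝ :=
  (Finset.range N).fold max 0 fun n => d (T^[n] x) (T^[n] y)

/-- The mean dimension `mdim(X,T) = lim_{ε→0} lim_{N→∞} widim_ε(X,d_N)/N`; the limit in `N`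
exists and equals the infimum by subadditivity, and the limit in `ε` is the supremum
by monotonicity. -/
noncomputable def mdim (X : Type*) [TopologicalSpace X] (d : X → X → ℝ) (T : X → X) : ℝ≥0∞ :=
  ⨆ (ε : ℝ) (_ : 0 < ε), ⨅ (N : ℕ) (_ : 0 < N), widim X (dynDist d T N) ε / (N : ℝ≥0∞)

/-- The relative mean dimension of a factor map `π`:
`mdim(π,T) = lim_{ε→0} lim_{N→∞} (sup_y widim_ε(π⁻¹(y), d_N))/N`. -/
noncomputable def mdimRel {X Y : Type*} [TopologicalSpace X] (d : X → X → ℝ)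
    (T : X → X) (π : X → Y) : ℝ≥0∞ :=
  ⨆ (ε : ℝ) (_ : 0 < ε), ⨅ (N : ℕ) (_ : 0 < N),
    (⨆ y : Y, widim ↥(π ⁻¹' {y}) (fun a b => dynDist d T N a.1 b.1) ε) / (N : ℝ≥0∞)

/-- The upper mean dimension of a subset `A ⊆ X`:
`lim_{ε→0} limsup_{N→∞} widim_ε(A,d_N)/N`. -/
noncomputable def umdim {X : Type*} [TopologicalSpace X] (d : X → X → ℝ) (T : X → X)
    (A : Set X) : ℝ≥0∞ :=
  ⨆ (ε : ℝ) (_ : 0 < ε),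
    Filter.limsup (fun N : ℕ =>
      widim ↥A (fun a b => dynDist d T N a.1 b.1) ε / (N : ℝ≥0∞)) Filter.atTop

/-- The lower mean dimension of a subset `A ⊆ X`:
`lim_{ε→0} liminf_{N→∞} widim_ε(A,d_N)/N`. -/
noncomputable def lmdim {X : Type*} [TopologicalSpace X] (d : X → X → ℝ) (T : X → X)
    (A : Set X) : ℝ≥0∞ :=
  ⨆ (ε : ℝ) (_ : 0 < ε),
    Filter.liminf (fun N : ℕ =>
      widim ↥A (fun a b => dynDist d T N a.1 b.1) ε / (N : ℝ≥0∞)) Filter.atTop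

/-- A factor map between dynamical systems: a continuous equivariant surjection. -/
structure IsFactorMap {X Y : Type*} [TopologicalSpace X] [TopologicalSpace Y]
    (T : X → X) (S : Y → Y) (π : X → Y) : Prop where
  continuous : Continuous π
  surjective : Function.Surjective π
  equivariant : ∀ x, π (T x) = S (π x)

/-- The orbit capacity `ocap(A) = lim_{N→∞} (1/N) sup_x Σ_{n<N} 1_A(Tⁿx)`; the limit exists
and equals the infimum by subadditivity. -/
noncomputable def ocap {X : Type*} (T : X → X) (A : Set X) : ℝ≥0∞ :=
  ⨅ (N : ℕ) (_ : 0 < N),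
    (⨆ x : X, ∑ n ∈ Finset.range N, A.indicator (fun _ => (1 : ℝ≥0∞)) (T^[n] x)) / (N : ℝ≥0∞)

/-- The small boundary property. -/
def SmallBoundaryProperty {Y : Type*} [TopologicalSpace Y] (S : Y → Y) : Prop :=
  ∀ y : Y, ∀ U : Set Y, IsOpen U → y ∈ U →
    ∃ V : Set Y, IsOpen V ∧ y ∈ V ∧ V ⊆ U ∧ ocap S (frontier V) = 0

/-- `d` is a metric on `X` compatible with the given topology. -/
def IsCompatibleMetric {X : Type*} [t : TopologicalSpace X] (d : X → X → ℝ) : Prop :=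
  ∃ m : MetricSpace X,
    m.toPseudoMetricSpace.toUniformSpace.toTopologicalSpace = t ∧
    ∀ x y, @dist X m.toPseudoMetricSpace.toDist x y = d x y


lemma key_min (a b c d : ℝ) (hab : a ≤ b) (hcd : c ≤ d) :
    min b d - min a d - min b c + min a c = max 0 (min b d - max a c) := by
  rcases le_total a c with h1 | h1 <;> rcases le_total b d with h2 | h2 <;>
    rcases le_total b c with h3 | h3 <;> rcases le_total a d with h4 | h4 <;>
    simp [min_def, max_def] <;> split_ifs <;> linarith

lemma chain_card {α β : Type*} [LinearOrder α] [LinearOrder β] [DecidableEq α] [DecidableEq β]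
    (T : Finset (α × β))
    (hne : T.Nonempty) (hch : ∀ a ∈ T, ∀ b ∈ T, a ≤ b ∨ b ≤ a) :
    T.card + 1 ≤ (T.image Prod.fst).card + (T.image Prod.snd).card := by
  classical
  induction T using Finset.strongInduction with
  | _ T ih =>
    obtain ⟨m, hm, hmax⟩ := T.exists_maximal hne
    have hle : ∀ b ∈ T, b ≤ m := by
      intro b hb
      rcases hch b hb m hm with h | h
      · exact h
      · rcases eq_or_lt_of_le h with h' | h'
        · exact h'.ge
        · exact hmax hb h'.le
    set T' := T.erase m with hT'
    rcases T'.eq_empty_or_nonempty with h0 | hne'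
    · have hTm : T = {m} := by
        apply Finset.eq_singleton_iff_unique_mem.2
        refine ⟨hm, fun b hb => ?_⟩
        by_contra hbm
        have hbT' : b ∈ T' := by rw [hT']; exact Finset.mem_erase.2 ⟨hbm, hb⟩
        rw [h0] at hbT'
        simp at hbT'
      rw [hTm]
      simp
    · have hsub : T' ⊂ T := Finset.erase_ssubset hm
      have hch' : ∀ a ∈ T', ∀ b ∈ T', a ≤ b ∨ b ≤ a := fun a ha b hb =>
        hch a (Finset.mem_of_mem_erase ha) b (Finset.mem_of_mem_erase hb)
      have IH := ih T' hsub hne' hch'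
      have hpos : 0 < T.card := Finset.card_pos.2 hne
      have hcard : T.card = T'.card + 1 := by
        rw [hT', Finset.card_erase_of_mem hm]
        omega
      have him1 : T'.image Prod.fst ⊆ T.image Prod.fst :=
        Finset.image_subset_image (Finset.erase_subset _ _)
      have him2 : T'.image Prod.snd ⊆ T.image Prod.snd :=
        Finset.image_subset_image (Finset.erase_subset _ _)
      have hkey : m.1 ∉ T'.image Prod.fst ∨ m.2 ∉ T'.image Prod.snd := by
        by_contra h
        push_neg at h
        obtain ⟨c, hc, hc1⟩ := Finset.mem_image.1 h.1
        obtain ⟨c', hc', hc2⟩ := Finset.mem_image.1 h.2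
        have hcT := Finset.mem_of_mem_erase hc
        have hc'T := Finset.mem_of_mem_erase hc'
        have h1 : c.2 < m.2 := by
          rcases lt_or_eq_of_le (hle c hcT).2 with h | h
          · exact h
          · exact absurd (Prod.ext hc1 h) (Finset.ne_of_mem_erase hc)
        have h2 : c'.1 < m.1 := by
          rcases lt_or_eq_of_le (hle c' hc'T).1 with h | h
          · exact h
          · exact absurd (Prod.ext h hc2) (Finset.ne_of_mem_erase hc')
        rcases hch c hcT c' hc'T with h | h
        · exact absurd (h.1.trans_lt h2) (by simp [hc1])
        · exact absurd (h.2.trans_lt h1) (by simp [hc2])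
      have hT1 : T.image Prod.fst = insert m.1 (T'.image Prod.fst) := by
        rw [hT', ← Finset.image_insert, Finset.insert_erase hm]
      have hT2 : T.image Prod.snd = insert m.2 (T'.image Prod.snd) := by
        rw [hT', ← Finset.image_insert, Finset.insert_erase hm]
      rcases hkey with h | h
      · have : (T.image Prod.fst).card = (T'.image Prod.fst).card + 1 := by
          rw [hT1, Finset.card_insert_of_notMem h]
        have h2c := Finset.card_le_card him2
        omega
      · have : (T.image Prod.snd).card = (T'.image Prod.snd).card + 1 := by
          rw [hT2, Finset.card_insert_of_notMem h]
        have h2c := Finset.card_le_card him1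
        omega

section AuxWidim

open Finset

private lemma diamOn_mono' {Z : Type*} (d : Z → Z → ℝ) {S T : Set Z} (h : S ⊆ T) :
    diamOn d S ≤ diamOn d T := by
  refine iSup₂_le fun x hx => iSup₂_le fun y hy => ?_
  exact le_iSup₂_of_le x (h hx) (le_iSup₂_of_le y (h hy) le_rfl)

private lemma diamOn_empty' {Z : Type*} (d : Z → Z → ℝ) : diamOn d (∅ : Set Z) = 0 := by
  simp [diamOn]

private lemma isEpsEmbedding_comp' {Z P Q : Type*} [TopologicalSpace Z] [TopologicalSpace P]
    [TopologicalSpace Q] {d : Z → Z → ℝ} {ε : ℝ} (hε : 0 < ε) {f : Z → P}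
    (hf : IsEpsEmbedding d ε f) {φ : P → Q} (hφc : Continuous φ)
    (hφi : Function.Injective φ) : IsEpsEmbedding d ε (φ ∘ f) := by
  refine ⟨hφc.comp hf.1, fun q => ?_⟩
  rcases Set.eq_empty_or_nonempty ((φ ∘ f) ⁻¹' {q}) with h | ⟨z, hz⟩
  · rw [h, diamOn_empty']
    exact ENNReal.ofReal_pos.2 hε
  · refine lt_of_le_of_lt (diamOn_mono' d ?_) (hf.2 (f z))
    intro w hw
    simp only [Set.mem_preimage, Set.mem_singleton_iff, Function.comp_apply] at *
    exact hφi (hw.trans hz.symm)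

/-- Transport a finite simplicial complex along an equivalence of vertex types. -/
private def FinSimpComplex.mapEquiv {V W : Type} [DecidableEq W] (e : V ≃ W) (K : FinSimpComplex V) :
    FinSimpComplex W where
  faces := K.faces.image (Finset.map e.toEmbedding)
  nonempty_of_mem := by
    intro s hs
    obtain ⟨t, ht, rfl⟩ := Finset.mem_image.1 hs
    simpa using K.nonempty_of_mem t ht
  down_closed := by
    intro s hs t hts htne
    obtain ⟨u, hu, rfl⟩ := Finset.mem_image.1 hs
    refine Finset.mem_image.2 ⟨t.map e.symm.toEmbedding, ?_, ?_⟩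
    · refine K.down_closed u hu _ ?_ (by simpa using htne)
      intro a ha
      obtain ⟨b, hb, rfl⟩ := Finset.mem_map.1 ha
      have hb' := hts hb
      obtain ⟨c, hc, hcb⟩ := Finset.mem_map.1 hb'
      simpa [← hcb] using hc
    · rw [Finset.map_map]
      ext a
      simp

private lemma FinSimpComplex.mapEquiv_faces {V W : Type} [DecidableEq W] (e : V ≃ W)
    (K : FinSimpComplex V) :
    (K.mapEquiv e).faces = K.faces.image (Finset.map e.toEmbedding) := rfl

private lemma FinSimpComplex.mapEquiv_dimLE {V W : Type} [DecidableEq W] (e : V ≃ W) (K : FinSimpComplex V)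
    {n : ℕ} (h : K.dimLE n) : (K.mapEquiv e).dimLE n := by
  intro s hs
  rw [FinSimpComplex.mapEquiv_faces] at hs
  obtain ⟨t, ht, rfl⟩ := Finset.mem_image.1 hs
  simpa using h t ht

/-- The induced continuous injection on realizations. -/
private def FinSimpComplex.spaceMap {V W : Type} [Fintype V] [Fintype W] [DecidableEq W] (e : V ≃ W)
    (K : FinSimpComplex V) (x : ↥K.space) : ↥(K.mapEquiv e).space := by
  refine ⟨fun w => (x : V → ℝ) (e.symm w), ?_, ?_, ?_⟩
  · intro w; exact x.2.1 (e.symm w)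
  · rw [Fintype.sum_equiv e.symm (fun w => (x : V → ℝ) (e.symm w)) (fun v => (x : V → ℝ) v)
      (fun w => rfl)]
    exact x.2.2.1
  · obtain ⟨s, hs, hsupp⟩ := x.2.2.2
    refine ⟨s.map e.toEmbedding,
      (FinSimpComplex.mapEquiv_faces e K) ▸ Finset.mem_image.2 ⟨s, hs, rfl⟩, fun w hw => ?_⟩
    refine Finset.mem_map.2 ⟨e.symm w, hsupp _ hw, by simp⟩

private lemma FinSimpComplex.spaceMap_continuous {V W : Type} [Fintype V] [Fintype W]
    [DecidableEq W] (e : V ≃ W) (K : FinSimpComplex V) : Continuous (K.spaceMap e) := by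
  refine Continuous.subtype_mk ?_ _
  exact continuous_pi fun w => (continuous_apply (e.symm w)).comp continuous_subtype_val

private lemma FinSimpComplex.spaceMap_injective {V W : Type} [Fintype V] [Fintype W]
    [DecidableEq W] (e : V ≃ W) (K : FinSimpComplex V) : Function.Injective (K.spaceMap e) := by
  intro x y h
  have h' := congrArg Subtype.val h
  refine Subtype.ext (funext fun v => ?_)
  have := congrFun h' (e v)
  simpa [FinSimpComplex.spaceMap] using this

/-- If there is an `ε`-embedding into the realization of an at most `n`-dimensional
complex on an arbitrary finite vertex type, then `widim ≤ n`. -/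
private lemma widim_le_of_embedding {Z : Type*} [TopologicalSpace Z] (d : Z → Z → ℝ)
    {ε : ℝ} (hε : 0 < ε) {n : ℕ} {V : Type} [Fintype V] (K : FinSimpComplex V)
    (f : Z → ↥K.space) (hdim : K.dimLE n) (hf : IsEpsEmbedding d ε f) :
    widim Z d ε ≤ (n : ℝ≥0∞) := by
  apply sInf_le
  refine ⟨n, rfl, Fintype.card V, K.mapEquiv (Fintype.equivFin V), ?_⟩
  refine ⟨(K.spaceMap (Fintype.equivFin V)) ∘ f,
    FinSimpComplex.mapEquiv_dimLE _ _ hdim,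
    isEpsEmbedding_comp' hε hf (K.spaceMap_continuous _) (K.spaceMap_injective _)⟩

end AuxWidim

section AuxCoupling

open Finset

private def extf {k : ℕ} (x : Fin k → ℝ) (i : ℕ) : ℝ := if h : i < k then x ⟨i, h⟩ else 0

private def cum {k : ℕ} (x : Fin k → ℝ) (i : ℕ) : ℝ := ∑ t ∈ Finset.range i, extf x t

variable {k l : ℕ} {x : Fin k → ℝ} {y : Fin l → ℝ}

private lemma extf_nonneg (hx : ∀ i, 0 ≤ x i) (i : ℕ) : 0 ≤ extf x i := by
  unfold extf; split_ifs with h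
  · exact hx _
  · exact le_refl 0

private lemma cum_nonneg (hx : ∀ i, 0 ≤ x i) (i : ℕ) : 0 ≤ cum x i :=
  Finset.sum_nonneg fun t _ => extf_nonneg hx t

private lemma cum_mono (hx : ∀ i, 0 ≤ x i) {i j : ℕ} (h : i ≤ j) : cum x i ≤ cum x j :=
  Finset.sum_le_sum_of_subset_of_nonneg (Finset.range_subset_range.2 h)
    (fun t _ _ => extf_nonneg hx t)

private lemma cum_zero : cum x 0 = 0 := by simp [cum]

private lemma cum_of_le (hk : k ≤ i) (hx1 : ∑ i, x i = 1) : cum x i = 1 := by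
  unfold cum
  rw [← Finset.sum_subset (Finset.range_subset_range.2 hk)
    (fun t _ ht => by unfold extf; rw [dif_neg (fun h => ht (Finset.mem_range.2 h))])]
  rw [← Fin.sum_univ_eq_sum_range (extf x) k, ← hx1]
  exact Finset.sum_congr rfl fun t _ => by simp [extf, t.isLt]

private lemma cum_le_one (hx : ∀ i, 0 ≤ x i) (hx1 : ∑ i, x i = 1) (i : ℕ) :
    cum x i ≤ 1 := by
  rcases le_total i k with h | h
  · exact (cum_mono hx h).trans (cum_of_le le_rfl hx1).le
  · exact (cum_of_le h hx1).le

private lemma cum_succ_sub (v : Fin k) : cum x ((v : ℕ) + 1) - cum x v = x v := by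
  unfold cum
  rw [Finset.sum_range_succ]
  simp [extf, v.isLt]

private def coup (x : Fin k → ℝ) (y : Fin l → ℝ) (vw : Fin k × Fin l) : ℝ :=
  min (cum x ((vw.1 : ℕ) + 1)) (cum y ((vw.2 : ℕ) + 1))
    - min (cum x (vw.1 : ℕ)) (cum y ((vw.2 : ℕ) + 1))
    - min (cum x ((vw.1 : ℕ) + 1)) (cum y (vw.2 : ℕ))
    + min (cum x (vw.1 : ℕ)) (cum y (vw.2 : ℕ))

private lemma coup_eq_max (hx : ∀ i, 0 ≤ x i) (hy : ∀ j, 0 ≤ y j) (vw : Fin k × Fin l) :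
    coup x y vw = max 0 (min (cum x ((vw.1 : ℕ) + 1)) (cum y ((vw.2 : ℕ) + 1))
      - max (cum x (vw.1 : ℕ)) (cum y (vw.2 : ℕ))) :=
  key_min _ _ _ _ (cum_mono hx (Nat.le_succ _)) (cum_mono hy (Nat.le_succ _))

private lemma coup_nonneg (hx : ∀ i, 0 ≤ x i) (hy : ∀ j, 0 ≤ y j) (vw : Fin k × Fin l) :
    0 ≤ coup x y vw := by
  rw [coup_eq_max hx hy]; exact le_max_left _ _

private lemma coup_pos_iff (hx : ∀ i, 0 ≤ x i) (hy : ∀ j, 0 ≤ y j) {vw : Fin k × Fin l}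
    (h : coup x y vw ≠ 0) :
    max (cum x (vw.1 : ℕ)) (cum y (vw.2 : ℕ))
      < min (cum x ((vw.1 : ℕ) + 1)) (cum y ((vw.2 : ℕ) + 1)) := by
  rw [coup_eq_max hx hy] at h
  by_contra hc
  push_neg at hc
  exact h (max_eq_left (by linarith))

private lemma coup_fst_ne (hx : ∀ i, 0 ≤ x i) (hy : ∀ j, 0 ≤ y j) {vw : Fin k × Fin l}
    (h : coup x y vw ≠ 0) : x vw.1 ≠ 0 := by
  have h1 := coup_pos_iff hx hy h
  have h2 : cum x (vw.1 : ℕ) < cum x ((vw.1 : ℕ) + 1) :=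
    lt_of_le_of_lt (le_max_left _ _) (lt_of_lt_of_le h1 (min_le_left _ _))
  have := cum_succ_sub (x := x) vw.1
  intro h0; rw [h0] at this; linarith

private lemma coup_snd_ne (hx : ∀ i, 0 ≤ x i) (hy : ∀ j, 0 ≤ y j) {vw : Fin k × Fin l}
    (h : coup x y vw ≠ 0) : y vw.2 ≠ 0 := by
  have h1 := coup_pos_iff hx hy h
  have h2 : cum y (vw.2 : ℕ) < cum y ((vw.2 : ℕ) + 1) :=
    lt_of_le_of_lt (le_max_right _ _) (lt_of_lt_of_le h1 (min_le_right _ _))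
  have := cum_succ_sub (x := y) vw.2
  intro h0; rw [h0] at this; linarith

private lemma coup_chain (hx : ∀ i, 0 ≤ x i) (hy : ∀ j, 0 ≤ y j) {a b : Fin k × Fin l}
    (ha : coup x y a ≠ 0) (hb : coup x y b ≠ 0) : a ≤ b ∨ b ≤ a := by
  have h1 := coup_pos_iff hx hy ha
  have h2 := coup_pos_iff hx hy hb
  rcases le_total a.1 b.1 with hf | hf <;> rcases le_total a.2 b.2 with hs | hs
  · exact Or.inl ⟨hf, hs⟩
  · -- a.1 ≤ b.1, b.2 ≤ a.2 : show comparable; if strict both ways, contradiction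
    rcases eq_or_lt_of_le hf with he | hf'
    · exact Or.inr ⟨he.ge, hs⟩
    · rcases eq_or_lt_of_le hs with he | hs'
      · exact Or.inl ⟨hf, he.ge⟩
      · exfalso
        have hA : cum x ((a.1 : ℕ) + 1) ≤ cum x (b.1 : ℕ) := cum_mono hx hf'
        have hB : cum y ((b.2 : ℕ) + 1) ≤ cum y (a.2 : ℕ) := cum_mono hy hs'
        have e1 : cum y (a.2 : ℕ) < cum x ((a.1 : ℕ) + 1) :=
          lt_of_le_of_lt (le_max_right _ _) (lt_of_lt_of_le h1 (min_le_left _ _))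
        have e2 : cum x (b.1 : ℕ) < cum y ((b.2 : ℕ) + 1) :=
          lt_of_le_of_lt (le_max_left _ _) (lt_of_lt_of_le h2 (min_le_right _ _))
        linarith
  · rcases eq_or_lt_of_le hf with he | hf'
    · exact Or.inl ⟨he.ge, hs⟩
    · rcases eq_or_lt_of_le hs with he | hs'
      · exact Or.inr ⟨hf, he.ge⟩
      · exfalso
        have hA : cum x ((b.1 : ℕ) + 1) ≤ cum x (a.1 : ℕ) := cum_mono hx hf'
        have hB : cum y ((a.2 : ℕ) + 1) ≤ cum y (b.2 : ℕ) := cum_mono hy hs'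
        have e1 : cum y (b.2 : ℕ) < cum x ((b.1 : ℕ) + 1) :=
          lt_of_le_of_lt (le_max_right _ _) (lt_of_lt_of_le h2 (min_le_left _ _))
        have e2 : cum x (a.1 : ℕ) < cum y ((a.2 : ℕ) + 1) :=
          lt_of_le_of_lt (le_max_left _ _) (lt_of_lt_of_le h1 (min_le_right _ _))
        linarith
  · exact Or.inr ⟨hf, hs⟩

private lemma coup_marg1 (hx : ∀ i, 0 ≤ x i) (hx1 : ∑ i, x i = 1)
    (hy : ∀ j, 0 ≤ y j) (hy1 : ∑ j, y j = 1) (v : Fin k) :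
    ∑ w : Fin l, coup x y (v, w) = x v := by
  have hrw : ∀ w : Fin l, coup x y (v, w) =
      (fun j : ℕ => min (cum x ((v : ℕ) + 1)) (cum y (j + 1))
        - min (cum x (v : ℕ)) (cum y (j + 1))
        - (min (cum x ((v : ℕ) + 1)) (cum y j) - min (cum x (v : ℕ)) (cum y j))) (w : ℕ) := by
    intro w; simp only [coup]; ring
  calc ∑ w : Fin l, coup x y (v, w)
      = ∑ j ∈ Finset.range l, (min (cum x ((v : ℕ) + 1)) (cum y (j + 1))
        - min (cum x (v : ℕ)) (cum y (j + 1))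
        - (min (cum x ((v : ℕ) + 1)) (cum y j) - min (cum x (v : ℕ)) (cum y j))) := by
        rw [← Fin.sum_univ_eq_sum_range]
        exact Finset.sum_congr rfl fun w _ => hrw w
    _ = (min (cum x ((v : ℕ) + 1)) (cum y l) - min (cum x (v : ℕ)) (cum y l))
        - (min (cum x ((v : ℕ) + 1)) (cum y 0) - min (cum x (v : ℕ)) (cum y 0)) :=
        Finset.sum_range_sub (fun j => min (cum x ((v : ℕ) + 1)) (cum y j)
          - min (cum x (v : ℕ)) (cum y j)) l
    _ = x v := by
        rw [cum_zero, cum_of_le le_rfl hy1]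
        rw [min_eq_left (cum_le_one hx hx1 _), min_eq_left (cum_le_one hx hx1 _),
          min_eq_right (cum_nonneg hx _), min_eq_right (cum_nonneg hx _)]
        rw [← cum_succ_sub (x := x) v]
        ring

private lemma coup_marg2 (hx : ∀ i, 0 ≤ x i) (hx1 : ∑ i, x i = 1)
    (hy : ∀ j, 0 ≤ y j) (hy1 : ∑ j, y j = 1) (w : Fin l) :
    ∑ v : Fin k, coup x y (v, w) = y w := by
  have hrw : ∀ v : Fin k, coup x y (v, w) =
      (fun i : ℕ => min (cum x (i + 1)) (cum y ((w : ℕ) + 1))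
        - min (cum x (i + 1)) (cum y (w : ℕ))
        - (min (cum x i) (cum y ((w : ℕ) + 1)) - min (cum x i) (cum y (w : ℕ)))) (v : ℕ) := by
    intro v; simp only [coup]; ring
  calc ∑ v : Fin k, coup x y (v, w)
      = ∑ i ∈ Finset.range k, (min (cum x (i + 1)) (cum y ((w : ℕ) + 1))
        - min (cum x (i + 1)) (cum y (w : ℕ))
        - (min (cum x i) (cum y ((w : ℕ) + 1)) - min (cum x i) (cum y (w : ℕ)))) := by
        rw [← Fin.sum_univ_eq_sum_range]
        exact Finset.sum_congr rfl fun v _ => hrw v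
    _ = (min (cum x k) (cum y ((w : ℕ) + 1)) - min (cum x k) (cum y (w : ℕ)))
        - (min (cum x 0) (cum y ((w : ℕ) + 1)) - min (cum x 0) (cum y (w : ℕ))) :=
        Finset.sum_range_sub (fun i => min (cum x i) (cum y ((w : ℕ) + 1))
          - min (cum x i) (cum y (w : ℕ))) k
    _ = y w := by
        rw [cum_zero, cum_of_le le_rfl hx1]
        rw [min_eq_right (cum_le_one hy hy1 _), min_eq_right (cum_le_one hy hy1 _),
          min_eq_left (cum_nonneg hy _), min_eq_left (cum_nonneg hy _)]
        rw [← cum_succ_sub (x := y) w]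
        ring

private lemma coup_sum (hx : ∀ i, 0 ≤ x i) (hx1 : ∑ i, x i = 1)
    (hy : ∀ j, 0 ≤ y j) (hy1 : ∑ j, y j = 1) :
    ∑ vw : Fin k × Fin l, coup x y vw = 1 := by
  rw [Fintype.sum_prod_type]
  rw [Finset.sum_congr rfl fun v _ => coup_marg1 hx hx1 hy hy1 v]
  exact hx1

end AuxCoupling

section AuxProdComplex

open Finset

variable {k l : ℕ}

open scoped Classical in
/-- The standard product triangulation complex. -/
private def prodComplex (K : FinSimpComplex (Fin k)) (L : FinSimpComplex (Fin l)) :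
    FinSimpComplex (Fin k × Fin l) where
  faces := Finset.univ.filter fun T =>
    T.Nonempty ∧ T.image Prod.fst ∈ K.faces ∧ T.image Prod.snd ∈ L.faces ∧
      ∀ a ∈ T, ∀ b ∈ T, a ≤ b ∨ b ≤ a
  nonempty_of_mem s hs := ((Finset.mem_filter.1 hs).2).1
  down_closed := by
    intro s hs t hts htne
    obtain ⟨-, -, h1, h2, hch⟩ := Finset.mem_filter.1 hs
    refine Finset.mem_filter.2 ⟨Finset.mem_univ _, htne, ?_, ?_, ?_⟩
    · exact K.down_closed _ h1 _ (Finset.image_subset_image hts) (htne.image _)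
    · exact L.down_closed _ h2 _ (Finset.image_subset_image hts) (htne.image _)
    · exact fun a ha b hb => hch a (hts ha) b (hts hb)

private lemma prodComplex_mem_faces {K : FinSimpComplex (Fin k)} {L : FinSimpComplex (Fin l)}
    {T : Finset (Fin k × Fin l)} :
    T ∈ (prodComplex K L).faces ↔
      T.Nonempty ∧ T.image Prod.fst ∈ K.faces ∧ T.image Prod.snd ∈ L.faces ∧
        ∀ a ∈ T, ∀ b ∈ T, a ≤ b ∨ b ≤ a := by
  classical
  constructor
  · intro h
    exact (Finset.mem_filter.1 h).2
  · intro h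
    exact Finset.mem_filter.2 ⟨Finset.mem_univ _, h⟩

private lemma prodComplex_dimLE {K : FinSimpComplex (Fin k)} {L : FinSimpComplex (Fin l)}
    {n m : ℕ} (hK : K.dimLE n) (hL : L.dimLE m) : (prodComplex K L).dimLE (n + m) := by
  intro s hs
  obtain ⟨hne, h1, h2, hch⟩ := prodComplex_mem_faces.1 hs
  have := chain_card s hne hch
  have c1 := hK _ h1
  have c2 := hL _ h2
  omega

private lemma continuous_cumf {Z : Type*} [TopologicalSpace Z] {K : FinSimpComplex (Fin k)}
    {f : Z → ↥K.space} (hf : Continuous f) (i : ℕ) :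
    Continuous fun z => cum ((f z : Fin k → ℝ)) i := by
  unfold cum
  apply continuous_finset_sum
  intro t _
  unfold extf
  split_ifs with h
  · exact (continuous_apply _).comp (continuous_subtype_val.comp hf)
  · exact continuous_const

/-- The coupling map into the product complex. -/
private def coupMap {X Y : Type*} (K : FinSimpComplex (Fin k)) (L : FinSimpComplex (Fin l))
    (f : X → ↥K.space) (g : Y → ↥L.space) (p : X × Y) : ↥(prodComplex K L).space := by
  classical
  refine ⟨coup ((f p.1 : Fin k → ℝ)) ((g p.2 : Fin l → ℝ)), ?_, ?_, ?_⟩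
  · exact fun vw => coup_nonneg (f p.1).2.1 (g p.2).2.1 vw
  · exact coup_sum (f p.1).2.1 (f p.1).2.2.1 (g p.2).2.1 (g p.2).2.2.1
  · set x : Fin k → ℝ := (f p.1 : Fin k → ℝ)
    set y : Fin l → ℝ := (g p.2 : Fin l → ℝ)
    refine ⟨Finset.univ.filter fun vw => coup x y vw ≠ 0, ?_, ?_⟩
    · refine prodComplex_mem_faces.2 ⟨?_, ?_, ?_, ?_⟩
      · rw [Finset.filter_nonempty_iff]
        by_contra h
        push_neg at h
        have h0 : ∑ vw : Fin k × Fin l, coup x y vw = 0 :=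
          Finset.sum_eq_zero fun vw _ => h vw (Finset.mem_univ _)
        rw [coup_sum (f p.1).2.1 (f p.1).2.2.1 (g p.2).2.1 (g p.2).2.2.1] at h0
        exact one_ne_zero h0
      · obtain ⟨s, hsK, hsupp⟩ := (f p.1).2.2.2
        refine K.down_closed s hsK _ ?_ ?_
        · intro a ha
          obtain ⟨vw, hvw, rfl⟩ := Finset.mem_image.1 ha
          exact hsupp _ (coup_fst_ne (f p.1).2.1 (g p.2).2.1 (Finset.mem_filter.1 hvw).2)
        · refine Finset.Nonempty.image ?_ _
          rw [Finset.filter_nonempty_iff]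
          by_contra h
          push_neg at h
          have h0 : ∑ vw : Fin k × Fin l, coup x y vw = 0 :=
            Finset.sum_eq_zero fun vw _ => h vw (Finset.mem_univ _)
          rw [coup_sum (f p.1).2.1 (f p.1).2.2.1 (g p.2).2.1 (g p.2).2.2.1] at h0
          exact one_ne_zero h0
      · obtain ⟨s, hsL, hsupp⟩ := (g p.2).2.2.2
        refine L.down_closed s hsL _ ?_ ?_
        · intro a ha
          obtain ⟨vw, hvw, rfl⟩ := Finset.mem_image.1 ha
          exact hsupp _ (coup_snd_ne (f p.1).2.1 (g p.2).2.1 (Finset.mem_filter.1 hvw).2)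
        · refine Finset.Nonempty.image ?_ _
          rw [Finset.filter_nonempty_iff]
          by_contra h
          push_neg at h
          have h0 : ∑ vw : Fin k × Fin l, coup x y vw = 0 :=
            Finset.sum_eq_zero fun vw _ => h vw (Finset.mem_univ _)
          rw [coup_sum (f p.1).2.1 (f p.1).2.2.1 (g p.2).2.1 (g p.2).2.2.1] at h0
          exact one_ne_zero h0
      · exact fun a ha b hb => coup_chain (f p.1).2.1 (g p.2).2.1
          (Finset.mem_filter.1 ha).2 (Finset.mem_filter.1 hb).2
    · intro vw hvw
      exact Finset.mem_filter.2 ⟨Finset.mem_univ _, hvw⟩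

private lemma coupMap_continuous {X Y : Type*} [TopologicalSpace X] [TopologicalSpace Y]
    (K : FinSimpComplex (Fin k)) (L : FinSimpComplex (Fin l))
    {f : X → ↥K.space} {g : Y → ↥L.space} (hf : Continuous f) (hg : Continuous g) :
    Continuous (coupMap K L f g) := by
  refine Continuous.subtype_mk ?_ _
  refine continuous_pi fun vw => ?_
  have hF : ∀ i : ℕ, Continuous fun p : X × Y => cum ((f p.1 : Fin k → ℝ)) i :=
    fun i => (continuous_cumf hf i).comp continuous_fst
  have hG : ∀ j : ℕ, Continuous fun p : X × Y => cum ((g p.2 : Fin l → ℝ)) j :=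
    fun j => (continuous_cumf hg j).comp continuous_snd
  show Continuous fun p : X × Y => coup ((f p.1 : Fin k → ℝ)) ((g p.2 : Fin l → ℝ)) vw
  unfold coup
  exact ((((hF _).min (hG _)).sub ((hF _).min (hG _))).sub ((hF _).min (hG _))).add
    ((hF _).min (hG _))

private lemma coupMap_inj {X Y : Type*} (K : FinSimpComplex (Fin k))
    (L : FinSimpComplex (Fin l)) (f : X → ↥K.space) (g : Y → ↥L.space) {p q : X × Y}
    (h : coupMap K L f g p = coupMap K L f g q) : f p.1 = f q.1 ∧ g p.2 = g q.2 := by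
  have h' : coup ((f p.1 : Fin k → ℝ)) ((g p.2 : Fin l → ℝ)) =
      coup ((f q.1 : Fin k → ℝ)) ((g q.2 : Fin l → ℝ)) := congrArg Subtype.val h
  constructor
  · refine Subtype.ext (funext fun v => ?_)
    rw [← coup_marg1 (f p.1).2.1 (f p.1).2.2.1 (g p.2).2.1 (g p.2).2.2.1 v,
      ← coup_marg1 (f q.1).2.1 (f q.1).2.2.1 (g q.2).2.1 (g q.2).2.2.1 v]
    exact Finset.sum_congr rfl fun w _ => by rw [h']
  · refine Subtype.ext (funext fun w => ?_)
    rw [← coup_marg2 (f p.1).2.1 (f p.1).2.2.1 (g p.2).2.1 (g p.2).2.2.1 w,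
      ← coup_marg2 (f q.1).2.1 (f q.1).2.2.1 (g q.2).2.1 (g q.2).2.2.1 w]
    exact Finset.sum_congr rfl fun v _ => by rw [h']

private lemma diamOn_prod_le {X Y : Type*} [MetricSpace X] [MetricSpace Y]
    (A : Set X) (B : Set Y) :
    diamOn (fun p q : X × Y => max (dist p.1 q.1) (dist p.2 q.2)) (A ×ˢ B) ≤
      max (diamOn dist A) (diamOn dist B) := by
  refine iSup₂_le fun p hp => iSup₂_le fun q hq => ?_
  have hmono : Monotone ENNReal.ofReal := fun _ _ h => ENNReal.ofReal_le_ofReal h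
  rw [hmono.map_max]
  refine max_le_max ?_ ?_
  · exact le_iSup₂_of_le p.1 hp.1 (le_iSup₂_of_le q.1 hq.1 le_rfl)
  · exact le_iSup₂_of_le p.2 hp.2 (le_iSup₂_of_le q.2 hq.2 le_rfl)

private lemma coupMap_isEpsEmbedding {X Y : Type*} [MetricSpace X] [MetricSpace Y]
    {ε : ℝ} (hε : 0 < ε) (K : FinSimpComplex (Fin k)) (L : FinSimpComplex (Fin l))
    {f : X → ↥K.space} {g : Y → ↥L.space}
    (hf : IsEpsEmbedding dist ε f) (hg : IsEpsEmbedding dist ε g) :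
    IsEpsEmbedding (fun p q : X × Y => max (dist p.1 q.1) (dist p.2 q.2)) ε
      (coupMap K L f g) := by
  refine ⟨coupMap_continuous K L hf.1 hg.1, fun c => ?_⟩
  rcases Set.eq_empty_or_nonempty (coupMap K L f g ⁻¹' {c}) with h | ⟨p₀, hp₀⟩
  · rw [h, diamOn_empty']
    exact ENNReal.ofReal_pos.2 hε
  · have hsub : coupMap K L f g ⁻¹' {c} ⊆ (f ⁻¹' {f p₀.1}) ×ˢ (g ⁻¹' {g p₀.2}) := by
      intro p hp
      have : coupMap K L f g p = coupMap K L f g p₀ := by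
        rw [Set.mem_preimage, Set.mem_singleton_iff] at hp hp₀
        rw [hp, hp₀]
      obtain ⟨h1, h2⟩ := coupMap_inj K L f g this
      exact ⟨h1, h2⟩
    refine lt_of_le_of_lt (diamOn_mono' _ hsub) ?_
    refine lt_of_le_of_lt (diamOn_prod_le _ _) ?_
    exact max_lt (hf.2 _) (hg.2 _)

private lemma widim_cases {Z : Type*} [TopologicalSpace Z] (d : Z → Z → ℝ) (ε : ℝ) :
    widim Z d ε = ⊤ ∨ ∃ n : ℕ, widim Z d ε = (n : ℝ≥0∞) ∧
      ∃ (k : ℕ) (K : FinSimpComplex (Fin k)) (f : Z → ↥K.space),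
        K.dimLE n ∧ IsEpsEmbedding d ε f := by
  set N := {n : ℕ | ∃ (k : ℕ) (K : FinSimpComplex (Fin k)) (f : Z → ↥K.space),
    K.dimLE n ∧ IsEpsEmbedding d ε f} with hN
  have hwS : widim Z d ε = sInf {r : ℝ≥0∞ | ∃ n : ℕ, (n : ℝ≥0∞) = r ∧ n ∈ N} := rfl
  rcases Set.eq_empty_or_nonempty N with h | h
  · left
    rw [hwS]
    refine (congrArg sInf ?_).trans sInf_empty
    rw [Set.eq_empty_iff_forall_notMem]
    rintro r ⟨n, -, hn⟩
    rw [Set.eq_empty_iff_forall_notMem] at h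
    exact h n hn
  · right
    have hmem := Nat.sInf_mem h
    refine ⟨sInf N, ?_, hmem⟩
    rw [hwS]
    apply le_antisymm
    · exact sInf_le ⟨sInf N, rfl, hmem⟩
    · refine le_sInf ?_
      rintro r ⟨n', hn', hw'⟩
      rw [← hn']
      exact_mod_cast Nat.sInf_le hw'

end AuxProdComplex

/-- **Lemma 2.1.** For metric spaces `(X,d)` and `(Y,d')`, with the max metric on `X × Y`,
`widim_ε(X × Y, d×d') ≤ widim_ε(X,d) + widim_ε(Y,d')` for every `ε > 0`. -/
theorem widim_prod_le {X Y : Type*} [MetricSpace X] [MetricSpace Y]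
    (ε : ℝ) (hε : 0 < ε) :
    widim (X × Y) (fun p q => max (dist p.1 q.1) (dist p.2 q.2)) ε ≤
      widim X dist ε + widim Y dist ε := by
  rcases widim_cases (Z := X) dist ε with hX | ⟨n, hn, k, K, f, hK, hf⟩
  · rw [hX, top_add]; exact le_top
  rcases widim_cases (Z := Y) dist ε with hY | ⟨m, hm, l, L, g, hL, hg⟩
  · rw [hY, add_top]; exact le_top
  rw [hn, hm, ← Nat.cast_add]
  exact widim_le_of_embedding _ hε (prodComplex K L) (coupMap K L f g)
    (prodComplex_dimLE hK hL) (coupMap_isEpsEmbedding hε K L hf hg)
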